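/- Let d ≥ 1, ν ∈ (0, 1) and M > 0. Let η : ℝ^d → ℂ satisfy sup_x |η(x)| ≤ M and |||η|||_{C^ν} ≤ M. For t > 0 let T_t denote convolution with the Gaussian heat kernel G_t. Then for every t > 0 and every u ∈ L²(ℝ^d), ‖T_t(η u) − η · (T_t u)‖_{L²(ℝ^d)} ≤ 2^{d+3} · M · t^{ν/2} · ‖u‖_{L²(ℝ^d)}. -/

import Mathlib

open MeasureTheory
open scoped Real

noncomputable section

open scoped ENNReal

/-- The Gaussian heat kernel `G_t(y) = (4πt)^{−d/2} e^{−|y|²/(4t)}`. -/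
def heatKernel (d : ℕ) (t : ℝ) (y : EuclideanSpace ℝ (Fin d)) : ℝ :=
  (4 * Real.pi * t) ^ (-(d : ℝ) / 2) * Real.exp (-‖y‖ ^ 2 / (4 * t))

lemma ennreal_sq (x : ℝ≥0∞) : x ^ (2:ℝ) = x * x := by
  rw [show (2:ℝ) = ((2:ℕ):ℝ) by norm_num, ENNReal.rpow_natCast, sq]

/-- For `0 < ν ≤ 1`, `t > 0` and `s ≥ 0`, `s^ν ≤ 2 t^{ν/2} e^{s²/(8t)}`. -/
lemma rpow_nu_le {ν t : ℝ} (hν0 : 0 < ν) (hν1 : ν ≤ 1) (ht : 0 < t) {s : ℝ} (hs : 0 ≤ s) :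
    s ^ ν ≤ 2 * t ^ (ν/2) * Real.exp (s^2/(8*t)) := by
  have hst : 0 < Real.sqrt t := Real.sqrt_pos.2 ht
  set a := s / Real.sqrt t with ha
  have ha0 : 0 ≤ a := div_nonneg hs hst.le
  have h1 : a ^ ν ≤ 1 + a := by
    rcases le_or_gt a 1 with h | h
    · have := Real.rpow_le_one ha0 h hν0.le; linarith
    · have h2 := Real.rpow_le_rpow_of_exponent_le h.le hν1
      rw [Real.rpow_one] at h2; linarith
  have h2 : 1 + a ≤ 2 * Real.exp (a^2/8) := by
    have h3 := Real.add_one_le_exp (a^2/8)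
    nlinarith [sq_nonneg (a - 2), Real.exp_pos (a^2/8)]
  have hsa : s = Real.sqrt t * a := by
    rw [ha]; field_simp
  have hsnu : s ^ ν = t ^ (ν/2) * a ^ ν := by
    rw [hsa, Real.mul_rpow hst.le ha0]
    congr 1
    rw [Real.sqrt_eq_rpow, ← Real.rpow_mul ht.le]
    congr 1
    ring
  have ha2 : a^2/8 = s^2/(8*t) := by
    rw [ha, div_pow, Real.sq_sqrt ht.le]
    field_simp
  have htν : 0 < t ^ (ν/2) := Real.rpow_pos_of_pos ht _
  calc s ^ ν = t^(ν/2) * a^ν := hsnu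
    _ ≤ t^(ν/2) * (2 * Real.exp (a^2/8)) := by nlinarith [Real.exp_pos (a^2/8)]
    _ = 2 * t^(ν/2) * Real.exp (s^2/(8*t)) := by rw [ha2]; ring

/-- A Hölder continuous function is continuous. -/
lemma continuous_of_holder {X : Type*} [MetricSpace X] {ν M : ℝ} (hν : 0 < ν) (hM : 0 < M)
    (η : X → ℂ)
    (hηHol : ∀ x y, 0 < dist x y → dist x y ≤ 1 → ‖η x - η y‖ ≤ M * dist x y ^ ν) :
    Continuous η := by
  rw [Metric.continuous_iff]
  intro x ε hε
  refine ⟨min 1 ((ε / (2*M)) ^ (1/ν)),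
    lt_min one_pos (Real.rpow_pos_of_pos (by positivity) _), fun y hy => ?_⟩
  rcases eq_or_ne y x with rfl | hxy
  · simpa using hε
  · have hd : 0 < dist y x := dist_pos.2 hxy
    have h1 : dist y x ≤ 1 := le_of_lt (lt_of_lt_of_le hy (min_le_left _ _))
    have h2 : dist y x ≤ (ε/(2*M))^(1/ν) := le_of_lt (lt_of_lt_of_le hy (min_le_right _ _))
    have h3 : dist y x ^ ν ≤ ((ε/(2*M))^(1/ν)) ^ ν := Real.rpow_le_rpow hd.le h2 hν.le
    have h4 : ((ε/(2*M):ℝ)^(1/ν)) ^ ν = ε/(2*M) := by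
      rw [← Real.rpow_mul (by positivity), one_div, inv_mul_cancel₀ hν.ne', Real.rpow_one]
    calc dist (η y) (η x) = ‖η y - η x‖ := by rw [dist_eq_norm]
      _ ≤ M * dist y x ^ ν := hηHol y x hd h1
      _ ≤ M * (ε/(2*M)) := by rw [← h4]; nlinarith
      _ < ε := by rw [mul_div_assoc']; rw [div_lt_iff₀ (by positivity)]; nlinarith

set_option maxHeartbeats 1000000 in
/-- `L²` bound for the commutator of the heat semigroup with
multiplication by a bounded Hölder continuous function. -/
theorem stmt7 (d : ℕ) (hd : 1 ≤ d) (ν M : ℝ) (hν : ν ∈ Set.Ioo (0 : ℝ) 1) (hM : 0 < M)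
    (η : EuclideanSpace ℝ (Fin d) → ℂ)
    (hηb : ∀ x, ‖η x‖ ≤ M)
    (hηHol : ∀ x y : EuclideanSpace ℝ (Fin d),
      0 < dist x y → dist x y ≤ 1 → ‖η x - η y‖ ≤ M * dist x y ^ ν)
    (t : ℝ) (ht : 0 < t)
    (u : EuclideanSpace ℝ (Fin d) → ℂ)
    (hu : MemLp u 2 (volume : Measure (EuclideanSpace ℝ (Fin d)))) :
    eLpNorm
      (fun x =>
        (∫ y, (heatKernel d t y : ℂ) * (η (x - y) * u (x - y))) -
          η x * ∫ y, (heatKernel d t y : ℂ) * u (x - y))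
      2 volume
      ≤ ENNReal.ofReal (2 ^ (d + 3) * M * t ^ (ν / 2)) * eLpNorm u 2 volume := by
  obtain ⟨hν0, hν1⟩ := hν
  have hπ : 0 < Real.pi := Real.pi_pos
  set C : ℝ := (4 * Real.pi * t) ^ (-(d:ℝ)/2) with hC
  have h4πt : (0:ℝ) < 4 * Real.pi * t := by positivity
  have hC0 : 0 < C := Real.rpow_pos_of_pos h4πt _
  -- heat kernel basic facts
  have hGdef : ∀ y : EuclideanSpace ℝ (Fin d),
      heatKernel d t y = C * Real.exp (-(1/(4*t)) * ‖y‖^2) := by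
    intro y; rw [heatKernel, hC]; congr 2; field_simp
  have hGpos : ∀ y : EuclideanSpace ℝ (Fin d), 0 < heatKernel d t y := by
    intro y; rw [hGdef]; positivity
  have hGcont : Continuous (heatKernel d t) := by
    rw [show heatKernel d t = fun y => C * Real.exp (-(1/(4*t)) * ‖y‖^2) from funext hGdef]
    exact continuous_const.mul
      (Real.continuous_exp.comp (continuous_const.mul (continuous_norm.pow 2)))
  -- integrable gaussians on Euclidean space
  have hgauss : ∀ b : ℝ, 0 < b →
      Integrable (fun v : EuclideanSpace ℝ (Fin d) => Real.exp (-b * ‖v‖^2)) volume := by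
    intro b hb
    have h := (GaussianFourier.integrable_cexp_neg_mul_sq_norm_add
      (b := (b:ℂ)) (by simpa using hb) 0 (0 : EuclideanSpace ℝ (Fin d))).norm
    refine h.congr (Filter.Eventually.of_forall fun v => ?_)
    simp [Complex.norm_exp]
    left
    norm_cast
  -- η is continuous
  have hηc : Continuous η := continuous_of_holder hν0 hM η hηHol
  -- Hölder-type bound on differences
  have hD : ∀ a b : EuclideanSpace ℝ (Fin d), ‖η a - η b‖ ≤ 2*M*‖a - b‖^ν := by
    intro a b
    rcases eq_or_ne a b with rfl | hab
    · simp [Real.zero_rpow hν0.ne']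
    have hdab : 0 < dist a b := dist_pos.2 hab
    rcases le_or_gt (dist a b) 1 with h1 | h1
    · calc ‖η a - η b‖ ≤ M * dist a b ^ ν := hηHol a b hdab h1
        _ ≤ 2*M*‖a-b‖^ν := by
            rw [dist_eq_norm] at *
            nlinarith [Real.rpow_nonneg (norm_nonneg (a-b)) ν]
    · have hone : (1:ℝ) ≤ dist a b ^ ν := by
        calc (1:ℝ) = 1 ^ ν := (Real.one_rpow ν).symm
          _ ≤ dist a b ^ ν := Real.rpow_le_rpow zero_le_one h1.le hν0.le
      calc ‖η a - η b‖ ≤ ‖η a‖ + ‖η b‖ := norm_sub_le _ _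
        _ ≤ 2*M*1 := by have := hηb a; have := hηb b; linarith
        _ ≤ 2*M*dist a b^ν := by nlinarith
        _ = 2*M*‖a-b‖^ν := by rw [dist_eq_norm]
  -- the comparison kernel κ
  set A₀ : ℝ := 4*M*t^(ν/2)*C with hA₀
  have hA₀0 : 0 < A₀ := by positivity
  set κ : EuclideanSpace ℝ (Fin d) → ℝ := fun y => A₀ * Real.exp (-(1/(8*t)) * ‖y‖^2) with hκ
  have hκpos : ∀ y, 0 < κ y := fun y => by rw [hκ]; positivity
  have hκcont : Continuous κ := continuous_const.mul
      (Real.continuous_exp.comp (continuous_const.mul (continuous_norm.pow 2)))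
  have hκint : Integrable κ volume := (hgauss _ (by positivity)).const_mul A₀
  have hGκ : ∀ y : EuclideanSpace ℝ (Fin d), heatKernel d t y * (2*M*‖y‖^ν) ≤ κ y := by
    intro y
    have h1 : ‖y‖ ^ ν ≤ 2 * t^(ν/2) * Real.exp (‖y‖^2/(8*t)) :=
      rpow_nu_le hν0 hν1.le ht (norm_nonneg y)
    have hexp : Real.exp (-(1/(4*t)) * ‖y‖^2) * Real.exp (‖y‖^2/(8*t))
        = Real.exp (-(1/(8*t)) * ‖y‖^2) := by
      rw [← Real.exp_add]; congr 1; field_simp; ring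
    rw [hGdef, hκ, hA₀]
    calc C * Real.exp (-(1/(4*t)) * ‖y‖^2) * (2*M*‖y‖^ν)
        ≤ C * Real.exp (-(1/(4*t)) * ‖y‖^2) * (2*M*(2*t^(ν/2)*Real.exp (‖y‖^2/(8*t)))) := by
          have hpos : (0:ℝ) < C * Real.exp (-(1/(4*t)) * ‖y‖^2) * (2*M) := by positivity
          nlinarith [Real.exp_pos (-(1/(4*t)) * ‖y‖^2)]
      _ = 4*M*t^(ν/2)*C * Real.exp (-(1/(8*t)) * ‖y‖^2) := by rw [← hexp]; ring
  -- measurable representative of u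
  have hum := hu.aestronglyMeasurable
  set g : EuclideanSpace ℝ (Fin d) → ℂ := hum.mk u with hgdef
  have hgm : StronglyMeasurable g := hum.stronglyMeasurable_mk
  have hug : u =ᵐ[volume] g := hum.ae_eq_mk
  have hgu : MemLp g 2 volume := hu.ae_eq hug
  -- kernel as an ℝ≥0∞ function
  set K : EuclideanSpace ℝ (Fin d) → ℝ≥0∞ := fun y => ENNReal.ofReal (κ y) with hKdef
  have hKmeas : Measurable K := hκcont.measurable.ennreal_ofReal
  have hKne : ∀ y, K y ≠ 0 := fun y => by
    simp only [hKdef, ne_eq, ENNReal.ofReal_eq_zero, not_le]; exact hκpos y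
  have hKnetop : ∀ y, K y ≠ ⊤ := fun y => ENNReal.ofReal_ne_top
  -- value of the kernel integral
  set A : ℝ := A₀ * (8*Real.pi*t) ^ ((d:ℝ)/2) with hA
  have hA0 : 0 < A := by positivity
  have hKint : ∫⁻ y, K y = ENNReal.ofReal A := by
    rw [hKdef]
    rw [← ofReal_integral_eq_lintegral_ofReal hκint (Filter.Eventually.of_forall
      (fun y => (hκpos y).le))]
    congr 1
    rw [hκ]
    simp only
    rw [integral_const_mul,
      GaussianFourier.integral_rexp_neg_mul_sq_norm (show (0:ℝ) < 1/(8*t) by positivity),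
      finrank_euclideanSpace_fin]
    rw [hA]
    congr 2
    field_simp
  -- memLp facts
  have hGC2 : MemLp (fun y : EuclideanSpace ℝ (Fin d) => ((heatKernel d t y : ℝ) : ℂ)) 2 volume := by
    have hsq : Integrable (fun y : EuclideanSpace ℝ (Fin d) => ‖heatKernel d t y‖ ^ 2) volume := by
      have heq : (fun y : EuclideanSpace ℝ (Fin d) => ‖heatKernel d t y‖ ^2)
          = fun y => C^2 * Real.exp (-(1/(2*t)) * ‖y‖^2) := by
        funext y
        rw [Real.norm_eq_abs, abs_of_pos (hGpos y), hGdef, mul_pow, sq (Real.exp _),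
          ← Real.exp_add]
        congr 1
        field_simp
        ring
      rw [heq]; exact (hgauss _ (by positivity)).const_mul _
    have hre : MemLp (heatKernel d t) 2 volume :=
      (memLp_two_iff_integrable_sq_norm hGcont.aestronglyMeasurable).2 hsq
    exact hre.of_le (Complex.continuous_ofReal.comp hGcont).aestronglyMeasurable
      (Filter.Eventually.of_forall fun y => by simp [Complex.norm_real])
  have honehalf : (1:ℝ≥0∞)/1 = 1/2 + 1/2 := by
    rw [ENNReal.div_add_div_same, one_div_one, one_add_one_eq_two,
      ENNReal.div_self (by norm_num) (by norm_num)]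
  have hutrans : ∀ x : EuclideanSpace ℝ (Fin d), MemLp (fun y => u (x - y)) 2 volume := by
    intro x
    have := hu.comp_measurePreserving (Measure.measurePreserving_sub_left volume x)
    simpa [Function.comp_def] using this
  have hI2 : ∀ x, Integrable
      (fun y : EuclideanSpace ℝ (Fin d) => (heatKernel d t y : ℂ) * u (x - y)) volume := by
    intro x
    have h := MemLp.smul (r := 1) (hutrans x) hGC2
    rw [memLp_one_iff_integrable] at h
    exact h.congr (Filter.Eventually.of_forall fun y => by simp [smul_eq_mul])
  have hηtop : MemLp η ⊤ volume :=
    memLp_top_of_bound hηc.aestronglyMeasurable M (Filter.Eventually.of_forall hηb)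
  have hηu : MemLp (fun z => η z * u z) 2 volume := by
    have h := MemLp.smul (r := 2) hu hηtop
    exact MemLp.ae_eq (Filter.Eventually.of_forall fun z => rfl) h
  have hηutrans : ∀ x, MemLp (fun y => η (x-y) * u (x-y)) 2 volume := by
    intro x
    have := hηu.comp_measurePreserving (Measure.measurePreserving_sub_left volume x)
    simpa [Function.comp_def] using this
  have hI1 : ∀ x, Integrable
      (fun y : EuclideanSpace ℝ (Fin d) =>
        (heatKernel d t y : ℂ) * (η (x-y) * u (x-y))) volume := by
    intro x
    have h := MemLp.smul (r := 1) (hηutrans x) hGC2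
    rw [memLp_one_iff_integrable] at h
    exact h.congr (Filter.Eventually.of_forall fun y => by simp [smul_eq_mul])
  -- rewrite the commutator as a single integral
  have hFeq : ∀ x, (∫ y, (heatKernel d t y : ℂ) * (η (x - y) * u (x - y))) -
      η x * ∫ y, (heatKernel d t y : ℂ) * u (x - y)
      = ∫ y, (heatKernel d t y : ℂ) * ((η (x - y) - η x) * u (x - y)) := by
    intro x
    rw [← integral_const_mul, ← integral_sub (hI1 x) ((hI2 x).const_mul (η x))]
    refine integral_congr_ae (Filter.Eventually.of_forall fun y => ?_)
    ring
  -- pointwise bound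
  have key : ∀ x, (‖(∫ y, (heatKernel d t y : ℂ) * (η (x - y) * u (x - y))) -
      η x * ∫ y, (heatKernel d t y : ℂ) * u (x - y)‖₊ : ℝ≥0∞)
      ≤ ∫⁻ y, K y * ↑‖g (x - y)‖₊ := by
    intro x
    rw [hFeq x]
    refine le_trans (enorm_integral_le_lintegral_enorm _) ?_
    have huy : (fun y => u (x - y)) =ᵐ[volume] fun y => g (x - y) :=
      (Measure.measurePreserving_sub_left volume x).quasiMeasurePreserving.ae_eq_comp hug
    calc ∫⁻ y, ↑‖(heatKernel d t y : ℂ) * ((η (x-y) - η x) * u (x-y))‖₊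
        ≤ ∫⁻ y, K y * ↑‖u (x - y)‖₊ := by
          refine lintegral_mono fun y => ?_
          rw [← enorm_eq_nnnorm, ← ofReal_norm, norm_mul, norm_mul, Complex.norm_real,
            Real.norm_eq_abs, abs_of_pos (hGpos y), ← mul_assoc,
            ENNReal.ofReal_mul (mul_nonneg (hGpos y).le (norm_nonneg _)), ofReal_norm]
          have hbd : heatKernel d t y * ‖η (x-y) - η x‖ ≤ κ y := by
            have h1 : ‖η (x-y) - η x‖ ≤ 2*M*‖y‖^ν := by
              have := hD (x-y) x
              simpa [sub_sub_cancel_left, norm_neg] using this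
            calc heatKernel d t y * ‖η (x-y) - η x‖
                ≤ heatKernel d t y * (2*M*‖y‖^ν) := by
                  nlinarith [hGpos y, norm_nonneg (η (x-y) - η x)]
              _ ≤ κ y := hGκ y
          exact mul_le_mul_left (ENNReal.ofReal_le_ofReal hbd) _
      _ = ∫⁻ y, K y * ↑‖g (x - y)‖₊ := by
          refine lintegral_congr_ae ?_
          filter_upwards [huy] with y hy
          rw [hy]
  -- Cauchy–Schwarz step
  have CS : ∀ x, (∫⁻ y, K y * ↑‖g (x-y)‖₊) ^ (2:ℝ)
      ≤ ENNReal.ofReal A * ∫⁻ y, K y * (↑‖g (x-y)‖₊ * ↑‖g (x-y)‖₊) := by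
    intro x
    have hmg : Measurable fun y : EuclideanSpace ℝ (Fin d) => (‖g (x - y)‖₊ : ℝ≥0∞) :=
      (hgm.measurable.comp (measurable_const.sub measurable_id)).enorm
    have hcs := ENNReal.lintegral_mul_le_Lp_mul_Lq volume
      Real.HolderConjugate.two_two
      (f := fun y => K y ^ (1/2:ℝ)) (g := fun y => K y ^ (1/2:ℝ) * ↑‖g (x-y)‖₊)
      (hKmeas.pow_const _).aemeasurable ((hKmeas.pow_const _).mul hmg).aemeasurable
    have hfg : (fun y => ((fun y => K y ^ (1/2:ℝ)) * fun y => K y ^ (1/2:ℝ) * ↑‖g (x-y)‖₊) y)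
        = fun y => K y * ↑‖g (x-y)‖₊ := by
      funext y
      simp only [Pi.mul_apply]
      rw [← mul_assoc, ← ENNReal.rpow_add _ _ (hKne y) (hKnetop y)]
      norm_num
    have hf2 : ∀ y : EuclideanSpace ℝ (Fin d), (K y ^ (1/2:ℝ)) ^ (2:ℝ) = K y := by
      intro y; rw [← ENNReal.rpow_mul]; norm_num
    have hg2 : ∀ y : EuclideanSpace ℝ (Fin d),
        (K y ^ (1/2:ℝ) * ↑‖g (x-y)‖₊) ^ (2:ℝ) = K y * (↑‖g (x-y)‖₊ * ↑‖g (x-y)‖₊) := by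
      intro y
      rw [ENNReal.mul_rpow_of_nonneg _ _ (by norm_num : (0:ℝ) ≤ 2), hf2 y, ennreal_sq]
    rw [hfg] at hcs
    simp only [hf2, hg2] at hcs
    calc (∫⁻ y, K y * ↑‖g (x-y)‖₊) ^ (2:ℝ)
        ≤ ((∫⁻ y, K y) ^ (1/2:ℝ) * (∫⁻ y, K y * (↑‖g (x-y)‖₊ * ↑‖g (x-y)‖₊)) ^ (1/2:ℝ)) ^ (2:ℝ) :=
          ENNReal.rpow_le_rpow hcs (by norm_num)
      _ = ENNReal.ofReal A * ∫⁻ y, K y * (↑‖g (x-y)‖₊ * ↑‖g (x-y)‖₊) := by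
          rw [ENNReal.mul_rpow_of_nonneg _ _ (by norm_num : (0:ℝ) ≤ 2),
            ← ENNReal.rpow_mul, ← ENNReal.rpow_mul, hKint]
          norm_num
  -- Fubini / translation invariance
  set N : ℝ≥0∞ := ∫⁻ z, ↑‖g z‖₊ * ↑‖g z‖₊ with hN
  have hswap : ∫⁻ x, ∫⁻ y, K y * (↑‖g (x-y)‖₊ * ↑‖g (x-y)‖₊) = ENNReal.ofReal A * N := by
    have hmeas : Measurable (fun p : EuclideanSpace ℝ (Fin d) × EuclideanSpace ℝ (Fin d) =>
        K p.2 * (↑‖g (p.1 - p.2)‖₊ * ↑‖g (p.1 - p.2)‖₊)) := by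
      have h1 : Measurable (fun p : EuclideanSpace ℝ (Fin d) × EuclideanSpace ℝ (Fin d) =>
          (‖g (p.1 - p.2)‖₊ : ℝ≥0∞)) :=
        (hgm.measurable.comp (measurable_fst.sub measurable_snd)).enorm
      exact (hKmeas.comp measurable_snd).mul (h1.mul h1)
    rw [lintegral_lintegral_swap hmeas.aemeasurable]
    have hinner : ∀ y : EuclideanSpace ℝ (Fin d),
        ∫⁻ x, ↑‖g (x-y)‖₊ * ↑‖g (x-y)‖₊ = N := by
      intro y
      have hmp : MeasurePreserving (fun x : EuclideanSpace ℝ (Fin d) => x - y) volume volume :=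
        measurePreserving_sub_right volume y
      rw [hN]
      exact hmp.lintegral_comp (hgm.measurable.enorm.mul hgm.measurable.enorm)
    calc ∫⁻ y, ∫⁻ x, K y * (↑‖g (x-y)‖₊ * ↑‖g (x-y)‖₊)
        = ∫⁻ y, K y * N := by
          refine lintegral_congr fun y => ?_
          rw [lintegral_const_mul' _ _ (hKnetop y), hinner y]
      _ = ENNReal.ofReal A * N := by
          rw [lintegral_mul_const'' _ hKmeas.aemeasurable, hKint]
  -- main estimate
  have main : ∫⁻ x, (∫⁻ y, K y * ↑‖g (x-y)‖₊) ^ (2:ℝ)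
      ≤ ENNReal.ofReal A * (ENNReal.ofReal A * N) := by
    calc ∫⁻ x, (∫⁻ y, K y * ↑‖g (x-y)‖₊) ^ (2:ℝ)
        ≤ ∫⁻ x, ENNReal.ofReal A * ∫⁻ y, K y * (↑‖g (x-y)‖₊ * ↑‖g (x-y)‖₊) :=
          lintegral_mono fun x => CS x
      _ = ENNReal.ofReal A * ∫⁻ x, ∫⁻ y, K y * (↑‖g (x-y)‖₊ * ↑‖g (x-y)‖₊) :=
          lintegral_const_mul' _ _ ENNReal.ofReal_ne_top
      _ = ENNReal.ofReal A * (ENNReal.ofReal A * N) := by rw [hswap]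
  -- norm of u / g
  have h2toReal : ((2:ℝ≥0∞).toReal) = (2:ℝ) := by simp
  have hNnorm : eLpNorm u 2 volume = N ^ (1/2:ℝ) := by
    rw [eLpNorm_congr_ae hug, eLpNorm_eq_lintegral_rpow_enorm_toReal two_ne_zero ENNReal.ofNat_ne_top,
      h2toReal, hN]
    congr 1
    exact lintegral_congr fun z => ennreal_sq _
  -- bound on A
  have hAbound : A ≤ 2 ^ (d + 3) * M * t ^ (ν / 2) := by
    have hmul : (4*Real.pi*t) ^ (-(d:ℝ)/2) * (8*Real.pi*t) ^ ((d:ℝ)/2) = 2 ^ ((d:ℝ)/2) := by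
      have h8 : (0:ℝ) < 8*Real.pi*t := by positivity
      rw [show -(d:ℝ)/2 = -((d:ℝ)/2) by ring, Real.rpow_neg h4πt.le,
        inv_mul_eq_div, ← Real.div_rpow h8.le h4πt.le]
      congr 1
      field_simp
      ring
    have h2d : (2:ℝ) ^ ((d:ℝ)/2) ≤ 2 ^ (d:ℝ) :=
      Real.rpow_le_rpow_of_exponent_le one_le_two
        (by have : (0:ℝ) ≤ (d:ℝ) := Nat.cast_nonneg d; linarith)
    have h2dn : (2:ℝ) ^ (d:ℝ) = 2 ^ d := by
      rw [Real.rpow_natCast]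
    have htν : (0:ℝ) < t ^ (ν/2) := Real.rpow_pos_of_pos ht _
    have h2dpos : (0:ℝ) < 2 ^ ((d:ℝ)/2) := Real.rpow_pos_of_pos two_pos _
    have hAeq : A = 4*M*t^(ν/2) * 2 ^ ((d:ℝ)/2) := by
      rw [hA, hA₀, hC]
      rw [mul_assoc (4*M*t^(ν/2)), hmul]
    rw [hAeq]
    have hpow : (2:ℝ)^(d+3) = 8 * 2^d := by ring
    rw [hpow]
    have h1 : 4*M*t^(ν/2) * 2 ^ ((d:ℝ)/2) ≤ 4*M*t^(ν/2) * 2 ^ (d:ℝ) := by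
      have : (0:ℝ) < 4*M*t^(ν/2) := by positivity
      nlinarith
    rw [h2dn] at h1
    have h2pos : (0:ℝ) < 2^d := by positivity
    nlinarith
  -- assemble
  rw [eLpNorm_eq_lintegral_rpow_enorm_toReal two_ne_zero ENNReal.ofNat_ne_top, h2toReal]
  calc (∫⁻ x, (‖(∫ y, (heatKernel d t y : ℂ) * (η (x - y) * u (x - y))) -
          η x * ∫ y, (heatKernel d t y : ℂ) * u (x - y)‖₊ : ℝ≥0∞) ^ (2:ℝ)) ^ (1/(2:ℝ))
      ≤ (∫⁻ x, (∫⁻ y, K y * ↑‖g (x-y)‖₊) ^ (2:ℝ)) ^ (1/(2:ℝ)) := by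
        refine ENNReal.rpow_le_rpow (lintegral_mono fun x => ?_) (by norm_num)
        exact ENNReal.rpow_le_rpow (key x) (by norm_num)
    _ ≤ (ENNReal.ofReal A * (ENNReal.ofReal A * N)) ^ (1/(2:ℝ)) :=
        ENNReal.rpow_le_rpow main (by norm_num)
    _ = ENNReal.ofReal A * N ^ (1/(2:ℝ)) := by
        rw [← mul_assoc, ← ennreal_sq,
          ENNReal.mul_rpow_of_nonneg _ _ (by norm_num : (0:ℝ) ≤ 1/2),
          ← ENNReal.rpow_mul]
        norm_num
    _ = ENNReal.ofReal A * eLpNorm u 2 volume := by rw [hNnorm]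
    _ ≤ ENNReal.ofReal (2 ^ (d + 3) * M * t ^ (ν / 2)) * eLpNorm u 2 volume :=
        mul_le_mul_left (ENNReal.ofReal_le_ofReal hAbound) _
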